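/- For every n ≥ 3, there exists a set R of n - 1 rooted triplets over an n-element label set such that R is incompatible but every proper subset of R is compatible. -/

import Mathlib

open SimpleGraph

universe u

/-- A quartet `xy|zw`: an unordered pair of unordered pairs of labels. -/
def quartet {L : Type u} (x y z w : L) : Sym2 (Sym2 L) := s(s(x, y), s(z, w))

/-- `q` is a genuine quartet: four pairwise distinct labels. -/
def IsQuartet {L : Type u} (q : Sym2 (Sym2 L)) : Prop :=
  ∃ x y z w : L, x ≠ y ∧ x ≠ z ∧ x ≠ w ∧ y ≠ z ∧ y ≠ w ∧ z ≠ w ∧ q = quartet x y z w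

/-- The label set `L(Q)` of a set of quartets. -/
def qLabelSet {L : Type u} (Q : Set (Sym2 (Sym2 L))) : Set L :=
  {x | ∃ q ∈ Q, ∃ p, p ∈ q ∧ x ∈ p}

/-- An unrooted phylogenetic tree whose leaves are in bijection with the label set `S`:
a finite tree with no degree-2 vertex, whose degree-1 vertices are exactly the labeled ones. -/
structure UTree (L : Type u) (S : Set L) where
  V : Type
  fV : Fintype V
  G : SimpleGraph V
  isTree : G.IsTree
  label : S → V
  labelInj : Function.Injective label
  leafIff : ∀ v : V, (∃ l : S, label l = v) ↔ (G.neighborSet v).ncard = 1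
  noDeg2 : ∀ v : V, (G.neighborSet v).ncard ≠ 2

/-- `T` displays the quartet `xy|zw`: the path between the leaves labeled `x` and `y`
is vertex-disjoint from the path between the leaves labeled `z` and `w`. -/
def UTree.displays4 {L : Type u} {S : Set L} (T : UTree L S) (x y z w : L) : Prop :=
  ∃ (hx : x ∈ S) (hy : y ∈ S) (hz : z ∈ S) (hw : w ∈ S)
    (p : T.G.Walk (T.label ⟨x, hx⟩) (T.label ⟨y, hy⟩))
    (p' : T.G.Walk (T.label ⟨z, hz⟩) (T.label ⟨w, hw⟩)),
    p.IsPath ∧ p'.IsPath ∧ ∀ v, v ∈ p.support → v ∉ p'.support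

def UTree.displays {L : Type u} {S : Set L} (T : UTree L S) (q : Sym2 (Sym2 L)) : Prop :=
  ∀ x y z w : L, q = quartet x y z w → T.displays4 x y z w

/-- A set of quartets is compatible over label set `S` if a single tree displays all of them. -/
def QCompat {L : Type u} (S : Set L) (Q : Set (Sym2 (Sym2 L))) : Prop :=
  ∃ T : UTree L S, ∀ q ∈ Q, T.displays q

/-- `χ` is a partition of the label set `S` (a character on `S`). -/
def IsPartitionOn {L : Type u} (S : Set L) (χ : Set (Set L)) : Prop :=
  (∀ B ∈ χ, B.Nonempty ∧ B ⊆ S) ∧ ∀ x ∈ S, ∃! B, B ∈ χ ∧ x ∈ B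

/-- The vertex set of the minimal subtree of `T` spanning the leaves labeled by `B`. -/
def UTree.span {L : Type u} {S : Set L} (T : UTree L S) (B : Set L) : Set T.V :=
  {v | ∃ (x y : L) (hx : x ∈ S) (hy : y ∈ S), x ∈ B ∧ y ∈ B ∧
    ∃ p : T.G.Walk (T.label ⟨x, hx⟩) (T.label ⟨y, hy⟩), p.IsPath ∧ v ∈ p.support}

/-- The character `χ` is convex on `T`: spanning subtrees of distinct blocks are disjoint. -/
def UTree.convexOn {L : Type u} {S : Set L} (T : UTree L S) (χ : Set (Set L)) : Prop :=
  ∀ B ∈ χ, ∀ B' ∈ χ, B ≠ B' → ∀ v ∈ T.span B, v ∉ T.span B'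

/-- A set of characters is compatible over `S` if a single tree makes all of them convex. -/
def CCompat {L : Type u} (S : Set L) (C : Set (Set (Set L))) : Prop :=
  ∃ T : UTree L S, ∀ χ ∈ C, T.convexOn χ

/-- The character `χ_q` corresponding to the quartet `xy|zw`:
blocks `{x,y}`, `{z,w}` and a singleton for every other label of `S`. -/
def chiQ {L : Type u} (S : Set L) (x y z w : L) : Set (Set L) :=
  {{x, y}, {z, w}} ∪ {B | ∃ l ∈ S, l ≠ x ∧ l ≠ y ∧ l ≠ z ∧ l ≠ w ∧ B = {l}}

/-- The set of characters corresponding to a set of quartets. -/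
def CQ {L : Type u} (S : Set L) (Q : Set (Sym2 (Sym2 L))) : Set (Set (Set L)) :=
  {χ | ∃ q ∈ Q, ∃ x y z w : L, q = quartet x y z w ∧ χ = chiQ S x y z w}

/-- A rooted phylogenetic tree on label set `S`. -/
structure RTree (L : Type u) (S : Set L) where
  V : Type
  fV : Fintype V
  G : SimpleGraph V
  isTree : G.IsTree
  root : V
  label : S → V
  labelInj : Function.Injective label
  leafIff : ∀ v : V, (∃ l : S, label l = v) ↔ ((G.neighborSet v).ncard = 1 ∧ v ≠ root)
  noDeg2 : ∀ v : V, v ≠ root → (G.neighborSet v).ncard ≠ 2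

/-- `u` is an ancestor of `v`: `u` lies on the path from the root to `v`. -/
def RTree.anc {L : Type u} {S : Set L} (T : RTree L S) (u v : T.V) : Prop :=
  ∃ p : T.G.Walk T.root v, p.IsPath ∧ u ∈ p.support

/-- `m` is the most recent common ancestor of the set `A` of vertices. -/
def RTree.isMRCA {L : Type u} {S : Set L} (T : RTree L S) (A : Set T.V) (m : T.V) : Prop :=
  (∀ v ∈ A, T.anc m v) ∧ ∀ w, (∀ v ∈ A, T.anc w v) → T.anc w m

/-- `T` displays the rooted triplet `ab|c`: the MRCA of `{a,b}` is a proper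
descendant of the MRCA of `{a,b,c}`. -/
def RTree.displays3 {L : Type u} {S : Set L} (T : RTree L S) (a b c : L) : Prop :=
  ∃ (ha : a ∈ S) (hb : b ∈ S) (hc : c ∈ S) (m M : T.V),
    T.isMRCA {T.label ⟨a, ha⟩, T.label ⟨b, hb⟩} m ∧
    T.isMRCA {T.label ⟨a, ha⟩, T.label ⟨b, hb⟩, T.label ⟨c, hc⟩} M ∧
    T.anc M m ∧ M ≠ m

/-- A rooted triplet `ab|c` is encoded as the pair `(s(a,b), c)`. -/
def RTree.displays {L : Type u} {S : Set L} (T : RTree L S) (t : Sym2 L × L) : Prop :=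
  ∀ a b c : L, t = (s(a, b), c) → T.displays3 a b c

def IsTriplet {L : Type u} (t : Sym2 L × L) : Prop :=
  ∃ a b c : L, a ≠ b ∧ a ≠ c ∧ b ≠ c ∧ t = (s(a, b), c)

/-- The label set `L(R)` of a set of rooted triplets. -/
def tLabelSet {L : Type u} (R : Set (Sym2 L × L)) : Set L :=
  {x | ∃ t ∈ R, x ∈ t.1 ∨ x = t.2}

/-- A set of rooted triplets is compatible if one rooted tree displays all of them. -/
def RCompat {L : Type u} (S : Set L) (R : Set (Sym2 L × L)) : Prop :=
  ∃ T : RTree L S, ∀ t ∈ R, T.displays t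

/-- The graph `[R,S]`: vertices `S`, with an edge `{a,b}` whenever `ab|c ∈ R` for some `c ∈ S`. -/
def tripGraph {L : Type u} (R : Set (Sym2 L × L)) (S : Set L) : SimpleGraph L where
  Adj x y := x ≠ y ∧ x ∈ S ∧ y ∈ S ∧ ∃ c ∈ S, (s(x, y), c) ∈ R
  symm := by
    refine ⟨?_⟩
    rintro x y ⟨hxy, hx, hy, c, hc, hR⟩
    exact ⟨hxy.symm, hy, hx, c, hc, by rwa [Sym2.eq_swap]⟩
  loopless := by refine ⟨?_⟩; rintro x ⟨hx, -⟩; exact hx rfl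

/-- The label set `L_{s,t} = {a_1,…,a_s, b_1,…,b_t}`, with `a_i = inl i` and `b_j = inr j`. -/
def Lst (s t : ℕ) : Set (ℕ ⊕ ℕ) := (Sum.inl '' Set.Icc 1 s) ∪ (Sum.inr '' Set.Icc 1 t)

/-- The quartet set `Q_{s,t} = {a_1b_1|a_sb_t} ∪ {a_i a_{i+1} | b_j b_{j+1} : 1 ≤ i < s, 1 ≤ j < t}`. -/
def Qst (s t : ℕ) : Finset (Sym2 (Sym2 (ℕ ⊕ ℕ))) :=
  insert (quartet (Sum.inl 1) (Sum.inr 1) (Sum.inl s) (Sum.inr t))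
    ((Finset.Ico 1 s ×ˢ Finset.Ico 1 t).image
      (fun p => quartet (Sum.inl p.1) (Sum.inl (p.1 + 1)) (Sum.inr p.2) (Sum.inr (p.2 + 1))))



namespace PTaux
variable {V : Type} (r : V) (par : V → V) (dep : V → ℕ)

def ptG : SimpleGraph V where
  Adj u v := u ≠ v ∧ (par u = v ∨ par v = u)
  symm := ⟨fun u v h => ⟨h.1.symm, h.2.symm⟩⟩
  loopless := ⟨fun u h => h.1 rfl⟩

variable {r par dep}
variable (hr : par r = r) (hstep : ∀ v, v ≠ r → dep v = dep (par v) + 1)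

include hstep in
lemma dep_par_lt {v : V} (hv : v ≠ r) : dep (par v) < dep v := by
  rw [hstep v hv]; omega

include hstep in
lemma par_ne {v : V} (hv : v ≠ r) : par v ≠ v := by
  intro h
  have := hstep v hv
  rw [h] at this
  omega

include hstep in
lemma adj_par {v : V} (hv : v ≠ r) : (ptG par).Adj v (par v) :=
  ⟨fun h => par_ne hstep hv h.symm, Or.inl rfl⟩

include hr hstep in
lemma dep_iterate (k : ℕ) (v : V) : dep (par^[k] v) ≤ dep v := by
  induction k generalizing v with
  | zero => simp
  | succ k ih =>
    rw [Function.iterate_succ_apply]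
    by_cases hv : v = r
    · rw [hv, hr]; exact ih r
    · exact le_trans (ih (par v)) (le_of_lt (dep_par_lt hstep hv))

include hr hstep in
lemma iterate_eq_self {k : ℕ} {v : V} (h : par^[k] v = v) : k = 0 ∨ v = r := by
  rcases k with _ | k
  · exact Or.inl rfl
  · by_cases hv : v = r
    · exact Or.inr hv
    · exfalso
      rw [Function.iterate_succ_apply] at h
      have h1 := dep_iterate hr hstep k (par v)
      rw [h] at h1
      exact absurd h1 (by simpa using dep_par_lt hstep hv)

/-- ancestor relation via iterated parents -/
def Anc (par : V → V) (u v : V) : Prop := ∃ k, par^[k] v = u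

include hr in
lemma anc_root_iff {u : V} : Anc par u r ↔ u = r := by
  constructor
  · rintro ⟨k, hk⟩; rw [Function.iterate_fixed hr k] at hk; exact hk.symm
  · rintro rfl; exact ⟨0, rfl⟩

include hr hstep in
lemma anc_step {u v : V} (hv : v ≠ r) : Anc par u v ↔ u = v ∨ Anc par u (par v) := by
  constructor
  · rintro ⟨k, hk⟩
    rcases k with _ | k
    · exact Or.inl hk.symm
    · rw [Function.iterate_succ_apply] at hk; exact Or.inr ⟨k, hk⟩
  · rintro (rfl | ⟨k, hk⟩)
    · exact ⟨0, rfl⟩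
    · exact ⟨k + 1, by rw [Function.iterate_succ_apply]; exact hk⟩

include hr hstep in
lemma exists_canonical : ∀ n (v : V), dep v ≤ n →
    ∃ p : (ptG par).Walk r v, p.IsPath ∧ ∀ u, u ∈ p.support ↔ Anc par u v := by
  intro n
  induction n with
  | zero =>
    intro v hv
    by_cases h : v = r
    · subst h
      exact ⟨Walk.nil, Walk.IsPath.nil, by simp [anc_root_iff hr, eq_comm]⟩
    · exfalso; have := dep_par_lt hstep h; omega
  | succ n ih =>
    intro v hv
    by_cases h : v = r
    · subst h
      exact ⟨Walk.nil, Walk.IsPath.nil, by simp [anc_root_iff hr, eq_comm]⟩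
    · obtain ⟨p, hp, hsup⟩ := ih (par v) (by have := dep_par_lt hstep h; omega)
      have hvn : v ∉ p.support := by
        rw [hsup]
        rintro ⟨k, hk⟩
        have : par^[k+1] v = v := by rw [Function.iterate_succ_apply]; exact hk
        rcases iterate_eq_self hr hstep this with h' | h'
        · omega
        · exact h h'
      refine ⟨p.concat (adj_par hstep h).symm, ?_, ?_⟩
      · rw [Walk.isPath_def, Walk.support_concat, List.nodup_append]
        exact ⟨hp.support_nodup, List.nodup_singleton v, fun a ha b hb => by simp at hb; subst hb; exact fun h => hvn (h ▸ ha)⟩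
      · intro u
        rw [Walk.support_concat, List.mem_append, hsup, anc_step hr hstep h]
        simp [or_comm]

include hr hstep in
lemma support_of_path : ∀ n {v : V} (p : (ptG par).Walk r v), p.length ≤ n → p.IsPath →
    ∀ u, u ∈ p.support ↔ Anc par u v := by
  intro n
  induction n with
  | zero =>
    intro v p hl hp u
    rcases p with _ | ⟨h, q⟩
    · simpa using (anc_root_iff hr (u := u)).symm
    · simp at hl
  | succ n ih =>
    intro v p hl hp u
    by_cases h : v = r
    · subst h
      rw [Walk.isPath_iff_eq_nil] at hp
      subst hp
      simpa using (anc_root_iff hr (u := u)).symm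
    · -- decompose p from the right
      rcases p with _ | ⟨ha, q⟩
      · exact absurd rfl h
      · obtain ⟨x, q₁, h', hc⟩ := Walk.exists_cons_eq_concat ha q
        rw [hc] at hp hl ⊢
        have hq₁ : q₁.IsPath := by
          rw [Walk.isPath_def] at hp ⊢
          rw [Walk.support_concat, List.nodup_append] at hp
          exact hp.1
        have hvq₁ : v ∉ q₁.support := by
          rw [Walk.isPath_def, Walk.support_concat, List.nodup_append] at hp
          intro hv
          exact hp.2.2 v hv v (by simp) rfl
        have hlen : q₁.length ≤ n := by
          rw [Walk.length_concat] at hl; omega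
        have hsup := ih q₁ hlen hq₁
        rcases h'.2 with hx | hx
        · -- par x = v : impossible, v would be in the support of q₁
          exfalso
          apply hvq₁
          rw [hsup v]
          exact ⟨1, by simpa using hx⟩
        · -- par v = x
          rw [Walk.support_concat, List.mem_append, hsup u, ← hx, anc_step hr hstep h]
          simp [or_comm]

include hr hstep in
lemma path_unique : ∀ n {v : V} (p q : (ptG par).Walk r v), dep v ≤ n → p.IsPath → q.IsPath →
    p = q := by
  intro n
  induction n with
  | zero =>
    intro v p q hl hp hq
    by_cases h : v = r
    · subst h
      rw [Walk.isPath_iff_eq_nil] at hp hq; rw [hp, hq]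
    · exfalso; have := dep_par_lt hstep h; omega
  | succ n ih =>
    intro v p q hl hp hq
    by_cases h : v = r
    · subst h
      rw [Walk.isPath_iff_eq_nil] at hp hq; rw [hp, hq]
    · have key : ∀ (w : (ptG par).Walk r v), w.IsPath →
          ∃ (w₁ : (ptG par).Walk r (par v)) (hh : (ptG par).Adj (par v) v),
            w₁.IsPath ∧ w = w₁.concat hh := by
        intro w hw
        rcases w with _ | ⟨ha, q'⟩
        · exact absurd rfl h
        · obtain ⟨x, q₁, h', hc⟩ := Walk.exists_cons_eq_concat ha q'
          have hq₁ : q₁.IsPath := by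
            rw [hc, Walk.isPath_def, Walk.support_concat, List.nodup_append] at hw
            rw [Walk.isPath_def]
            exact hw.1
          have hvq₁ : v ∉ q₁.support := by
            rw [hc, Walk.isPath_def, Walk.support_concat, List.nodup_append] at hw
            intro hv
            exact hw.2.2 v hv v (by simp) rfl
          rcases h'.2 with hx | hx
          · exfalso
            apply hvq₁
            rw [support_of_path hr hstep q₁.length q₁ le_rfl hq₁ v]
            exact ⟨1, by simpa using hx⟩
          · subst hx
            exact ⟨q₁, h', hq₁, hc⟩
      obtain ⟨p₁, hh₁, hp₁, rfl⟩ := key p hp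
      obtain ⟨q₁, hh₂, hq₁, rfl⟩ := key q hq
      have := ih p₁ q₁ (by have := dep_par_lt hstep h; omega) hp₁ hq₁
      subst this
      rfl

include hr hstep in
lemma pt_connected : (ptG par).Connected := by
  haveI : Nonempty V := ⟨r⟩
  have hreach : ∀ v : V, (ptG par).Reachable r v := fun v =>
    ⟨(exists_canonical hr hstep (dep v) v le_rfl).choose⟩
  exact Connected.mk fun u v => ((hreach u).symm).trans (hreach v)

include hr hstep in
lemma pt_acyclic : (ptG par).IsAcyclic := by
  classical
  intro v₀ c hc
  -- pick a vertex of maximal depth in the support of c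
  have hne : c.support.toFinset.Nonempty := by
    refine ⟨v₀, ?_⟩
    simp only [List.mem_toFinset]
    exact c.start_mem_support
  obtain ⟨v, hv1, hmax'⟩ := c.support.toFinset.exists_max_image dep hne
  rw [List.mem_toFinset] at hv1
  have hmax : ∀ w ∈ c.support, dep w ≤ dep v := fun w hw =>
    hmax' w (List.mem_toFinset.mpr hw)
  have hmem : ∀ w, w ∈ (c.rotate _ hv1).support → dep w ≤ dep v := by
    intro w hw
    rw [Walk.support_eq_cons, List.mem_cons] at hw
    rcases hw with rfl | hw
    · exact le_rfl
    · exact hmax w (List.mem_of_mem_tail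
        ((Walk.support_rotate c _ hv1).mem_iff.mp hw))
  have hc' := (Walk.isCycle_rotate hv1).mpr hc
  set c' := c.rotate _ hv1 with hc'def
  clear_value c'
  clear hc'def hmax hmax' hv1 hc
  rcases c' with _ | ⟨ha, q⟩
  · exact hc'.not_of_nil
  · rename_i x
    -- ha : Adj v x, q : Walk x v
    have hxv : x ≠ v := fun h => ha.1 h.symm
    have hxdep : dep x ≤ dep v := by
      apply hmem
      rw [Walk.support_cons]
      right
      exact q.start_mem_support
    have hx : par v = x := by
      rcases ha.2 with h | h
      · exact h
      · exfalso
        by_cases hxr : x = r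
        · rw [hxr, hr] at h
          exact hxv (hxr.trans h)
        · have := hstep x hxr
          rw [h] at this
          omega
    rcases q with _ | ⟨h2, q2⟩
    · exact hxv rfl
    · rename_i z
      -- q = cons h2 q2, h2 : Adj x z, q2 : Walk z v
      obtain ⟨y, q₁, h', hc2⟩ := Walk.exists_cons_eq_concat h2 q2
      -- h' : Adj y v, q₁ : Walk x y
      have hydep : dep y ≤ dep v := by
        apply hmem
        rw [Walk.support_cons]
        right
        rw [hc2, Walk.support_concat]
        exact List.mem_append.mpr (Or.inl q₁.end_mem_support)
      have hy : par v = y := by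
        rcases h'.2 with h | h
        · exfalso
          by_cases hyr : y = r
          · rw [hyr, hr] at h
            exact h'.1 (hyr.trans h)
          · have := hstep y hyr
            rw [h] at this
            omega
        · exact h
      have hxy : x = y := by rw [← hx, hy]
      subst hxy
      -- now q₁ : Walk x x with nodup support
      have hnd : (Walk.cons h2 q2).support.Nodup := by
        have := hc'.2
        rwa [Walk.support_cons, List.tail_cons] at this
      have hnd₁ : q₁.support.Nodup := by
        rw [hc2, Walk.support_concat, List.nodup_append] at hnd
        exact hnd.1
      have hq₁nil : q₁ = Walk.nil := by
        rw [← Walk.isPath_iff_eq_nil, Walk.isPath_def]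
        exact hnd₁
      have hlen : (Walk.cons h2 q2).length = 1 := by
        rw [hc2, Walk.length_concat, hq₁nil]
        simp
      have h3 := hc'.three_le_length
      rw [Walk.length_cons, hlen] at h3
      omega

include hr hstep in
lemma pt_isTree : (ptG par).IsTree :=
  ⟨pt_connected hr hstep, pt_acyclic hr hstep⟩

include hr hstep in
lemma pt_anc_iff {u v : V} :
    (∃ p : (ptG par).Walk r v, p.IsPath ∧ u ∈ p.support) ↔ Anc par u v := by
  constructor
  · rintro ⟨p, hp, hu⟩
    exact (support_of_path hr hstep p.length p le_rfl hp u).mp hu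
  · intro h
    obtain ⟨p, hp, hsup⟩ := exists_canonical hr hstep (dep v) v le_rfl
    exact ⟨p, hp, (hsup u).mpr h⟩

end PTaux
-- Stage 2 : ancestor theory on an arbitrary RTree
section Stage2

variable {L : Type} {S : Set L}

namespace RTree

variable (T : RTree L S)

noncomputable def rpath (v : T.V) : T.G.Walk T.root v :=
  (T.isTree.existsUnique_path T.root v).choose

lemma rpath_isPath (v : T.V) : (T.rpath v).IsPath :=
  (T.isTree.existsUnique_path T.root v).choose_spec.1

lemma eq_rpath {v : T.V} (p : T.G.Walk T.root v) (hp : p.IsPath) : p = T.rpath v :=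
  (T.isTree.existsUnique_path T.root v).choose_spec.2 p hp

lemma anc_iff_mem {u v : T.V} : T.anc u v ↔ u ∈ (T.rpath v).support := by
  constructor
  · rintro ⟨p, hp, hu⟩
    rwa [T.eq_rpath p hp] at hu
  · intro h
    exact ⟨T.rpath v, T.rpath_isPath v, h⟩

lemma anc_refl (v : T.V) : T.anc v v :=
  ⟨T.rpath v, T.rpath_isPath v, SimpleGraph.Walk.end_mem_support _⟩

lemma anc_trans {u v w : T.V} (h1 : T.anc u v) (h2 : T.anc v w) : T.anc u w := by
  classical
  rw [anc_iff_mem] at h1 h2 ⊢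
  have hpath := (T.rpath_isPath w).takeUntil h2
  have heq := T.eq_rpath _ hpath
  rw [← heq] at h1
  exact (T.rpath w).support_takeUntil_subset h2 h1

lemma anc_antisymm {u v : T.V} (h1 : T.anc u v) (h2 : T.anc v u) : u = v := by
  classical
  rw [anc_iff_mem] at h1 h2
  have e1 : (T.rpath v).takeUntil u h1 = T.rpath u :=
    T.eq_rpath _ ((T.rpath_isPath v).takeUntil h1)
  have e2 : (T.rpath u).takeUntil v h2 = T.rpath v :=
    T.eq_rpath _ ((T.rpath_isPath u).takeUntil h2)
  have l1 : (T.rpath u).length ≤ (T.rpath v).length := by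
    rw [← e1]; exact SimpleGraph.Walk.length_takeUntil_le _ _
  have l2 : (T.rpath v).length ≤ (T.rpath u).length := by
    rw [← e2]; exact SimpleGraph.Walk.length_takeUntil_le _ _
  have hspec := (T.rpath u).take_spec h2
  have hlen := congrArg SimpleGraph.Walk.length hspec
  rw [SimpleGraph.Walk.length_append, e2] at hlen
  have : ((T.rpath u).dropUntil v h2).length = 0 := by omega
  exact (SimpleGraph.Walk.eq_of_length_eq_zero this).symm

end RTree

-- for any walk and two support elements, one lies on the initial segment up to the other
lemma takeUntil_support_or {V : Type*} [DecidableEq V] {G : SimpleGraph V} :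
    ∀ {a c : V} (p : G.Walk a c) {u w : V} (hu : u ∈ p.support) (hw : w ∈ p.support),
      u ∈ (p.takeUntil w hw).support ∨ w ∈ (p.takeUntil u hu).support := by
  intro a c p
  induction p with
  | nil =>
    intro u w hu hw
    rw [SimpleGraph.Walk.mem_support_nil_iff] at hu hw
    subst hu; subst hw
    left; exact SimpleGraph.Walk.start_mem_support _
  | cons h q ih =>
    intro u w hu hw
    rename_i a b c'
    by_cases hwa : w = a
    · right
      subst hwa
      exact SimpleGraph.Walk.start_mem_support _
    by_cases hua : u = a
    · left
      subst hua
      exact SimpleGraph.Walk.start_mem_support _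
    · have hu' : u ∈ q.support := by
        rw [SimpleGraph.Walk.support_cons, List.mem_cons] at hu
        exact hu.resolve_left hua
      have hw' : w ∈ q.support := by
        rw [SimpleGraph.Walk.support_cons, List.mem_cons] at hw
        exact hw.resolve_left hwa
      have hta : (SimpleGraph.Walk.cons h q).takeUntil w hw
          = SimpleGraph.Walk.cons h (q.takeUntil w hw') := by
        simp [SimpleGraph.Walk.takeUntil, Ne.symm hwa]
      have htb : (SimpleGraph.Walk.cons h q).takeUntil u hu
          = SimpleGraph.Walk.cons h (q.takeUntil u hu') := by
        simp [SimpleGraph.Walk.takeUntil, Ne.symm hua]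
      rcases ih hu' hw' with h' | h'
      · left; rw [hta, SimpleGraph.Walk.support_cons]; exact List.mem_cons_of_mem _ h'
      · right; rw [htb, SimpleGraph.Walk.support_cons]; exact List.mem_cons_of_mem _ h'

namespace RTree
variable (T : RTree L S)

lemma anc_total {u w b : T.V} (hu : T.anc u b) (hw : T.anc w b) :
    T.anc u w ∨ T.anc w u := by
  classical
  rw [anc_iff_mem] at hu hw
  rcases takeUntil_support_or (T.rpath b) hu hw with h | h
  · left
    rw [anc_iff_mem, ← T.eq_rpath _ ((T.rpath_isPath b).takeUntil hw)]
    exact h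
  · right
    rw [anc_iff_mem, ← T.eq_rpath _ ((T.rpath_isPath b).takeUntil hu)]
    exact h

lemma mrca_unique {A : Set T.V} {m m' : T.V} (h : T.isMRCA A m) (h' : T.isMRCA A m') :
    m = m' :=
  T.anc_antisymm (h'.2 m h.1) (h.2 m' h'.1)

lemma mrca_derived {va vb vc m M : T.V}
    (hm : T.isMRCA {va, vb} m) (hM : T.isMRCA {va, vb, vc} M)
    (hanc : T.anc M m) (hne : M ≠ m) :
    T.isMRCA {vb, vc} M ∧ T.isMRCA {va, vc} M := by
  have hMa : T.anc M va := hM.1 va (by simp)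
  have hMb : T.anc M vb := hM.1 vb (by simp)
  have hMc : T.anc M vc := hM.1 vc (by simp)
  have hma : T.anc m va := hm.1 va (by simp)
  have hmb : T.anc m vb := hm.1 vb (by simp)
  have key : ∀ w, T.anc w vc → T.anc w va ∨ T.anc w vb → T.anc w M := by
    intro w hwc hw
    have hwm : T.anc w m ∨ T.anc m w := by
      rcases hw with hw | hw
      · exact T.anc_total hw hma
      · exact T.anc_total hw hmb
    rcases hwm with hwm | hwm
    · -- w is an ancestor of m, hence of va, vb; also of vc: common ancestor of all three
      apply hM.2
      intro x hx
      rcases hx with rfl | rfl | rfl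
      · exact T.anc_trans hwm hma
      · exact T.anc_trans hwm hmb
      · exact hwc
    · -- m is an ancestor of w, hence of vc : m common ancestor of all three, contra
      exfalso
      apply hne
      apply T.anc_antisymm hanc
      exact hM.2 m (by rintro x (rfl | rfl | rfl) <;>
          [exact hma; exact hmb; exact T.anc_trans hwm hwc])
  constructor
  · constructor
    · rintro x (rfl | rfl)
      · exact hMb
      · exact hMc
    · intro w hw
      exact key w (hw vc (by simp)) (Or.inr (hw vb (by simp)))
  · constructor
    · rintro x (rfl | rfl)
      · exact hMa
      · exact hMc
    · intro w hw
      exact key w (hw vc (by simp)) (Or.inl (hw va (by simp)))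

lemma displays3_swap {a b c : L} (h : T.displays3 a b c) : T.displays3 b a c := by
  obtain ⟨ha, hb, hc, m, M, h1, h2, h3, h4⟩ := h
  exact ⟨hb, ha, hc, m, M, by rwa [Set.pair_comm], by rwa [Set.insert_comm], h3, h4⟩

end RTree
end Stage2
-- Stage 3 : the gadget tree
namespace Gad

def F (o : ℕ) (B A : Finset ℕ) : Finset (ℕ × ℕ) :=
  ({(0,0), (0,1)} : Finset (ℕ × ℕ))
  ∪ (if 2 ≤ B.card then {((0:ℕ),(2:ℕ))} else ∅)
  ∪ (if 2 ≤ A.card then {((0:ℕ),(3:ℕ))} else ∅)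
  ∪ (insert o B).image (fun l => (3, l))
  ∪ A.image (fun l => (4, l))

def par (o : ℕ) (B A : Finset ℕ) : ℕ × ℕ → ℕ × ℕ
  | (0,1) => (0,0)
  | (0,2) => (0,1)
  | (0,3) => (0,0)
  | (3,l) => if l = o then (0,1) else if 2 ≤ B.card then (0,2) else (0,1)
  | (4,_) => if 2 ≤ A.card then (0,3) else (0,0)
  | _ => (0,0)

def dep (o : ℕ) (B A : Finset ℕ) : ℕ × ℕ → ℕ
  | (0,1) => 1
  | (0,2) => 2
  | (0,3) => 1
  | (3,l) => if l = o then 2 else if 2 ≤ B.card then 3 else 2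
  | (4,_) => if 2 ≤ A.card then 2 else 1
  | _ => 0

variable {o : ℕ} {B A : Finset ℕ}

lemma mem_F_iff {x : ℕ × ℕ} :
    x ∈ F o B A ↔ x = (0,0) ∨ x = (0,1) ∨ (x = (0,2) ∧ 2 ≤ B.card) ∨
      (x = (0,3) ∧ 2 ≤ A.card) ∨ (∃ l, (l = o ∨ l ∈ B) ∧ x = (3,l)) ∨
      (∃ l ∈ A, x = (4,l)) := by
  simp only [F, Finset.mem_union, Finset.mem_insert, Finset.mem_singleton, Finset.mem_image]
  constructor
  · rintro (((((h | h) | h) | h) | ⟨l, hl, rfl⟩) | ⟨l, hl, rfl⟩)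
    · tauto
    · tauto
    · split_ifs at h with hc
      · simp at h; tauto
      · simp at h
    · split_ifs at h with hc
      · simp at h; tauto
      · simp at h
    · exact Or.inr (Or.inr (Or.inr (Or.inr (Or.inl ⟨l, by simpa using hl, rfl⟩))))
    · exact Or.inr (Or.inr (Or.inr (Or.inr (Or.inr ⟨l, hl, rfl⟩))))
  · rintro (h | h | ⟨h, hc⟩ | ⟨h, hc⟩ | ⟨l, hl, rfl⟩ | ⟨l, hl, rfl⟩)
    · subst h; left; left; left; left; left; rfl
    · subst h; left; left; left; left; right; rfl
    · subst h; left; left; left; right; simp [hc]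
    · subst h; left; left; right; simp [hc]
    · left; right; exact ⟨l, by simpa using hl, rfl⟩
    · right; exact ⟨l, hl, rfl⟩

-- par simp lemmas
lemma par_root : par o B A (0,0) = (0,0) := rfl
lemma par_b : par o B A (0,1) = (0,0) := rfl
lemma par_b' : par o B A (0,2) = (0,1) := rfl
lemma par_a : par o B A (0,3) = (0,0) := rfl
lemma par_leafo : par o B A (3,o) = (0,1) := by simp [par]
lemma par_leafB {l : ℕ} (h : l ≠ o) (h2 : 2 ≤ B.card) : par o B A (3,l) = (0,2) := by
  simp [par, h, h2]
lemma par_leafB1 {l : ℕ} (h : l ≠ o) (h2 : ¬ 2 ≤ B.card) : par o B A (3,l) = (0,1) := by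
  simp [par, h, h2]
lemma par_leafA2 {l : ℕ} (h2 : 2 ≤ A.card) : par o B A (4,l) = (0,3) := by
  simp [par, h2]
lemma par_leafA1 {l : ℕ} (h2 : ¬ 2 ≤ A.card) : par o B A (4,l) = (0,0) := by
  simp [par, h2]

lemma par_mem {x : ℕ × ℕ} (hx : x ∈ F o B A) : par o B A x ∈ F o B A := by
  rw [mem_F_iff] at hx ⊢
  rcases hx with rfl | rfl | ⟨rfl, hc⟩ | ⟨rfl, hc⟩ | ⟨l, hl, rfl⟩ | ⟨l, hl, rfl⟩
  · rw [par_root]; tauto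
  · rw [par_b]; tauto
  · rw [par_b']; tauto
  · rw [par_a]; tauto
  · by_cases ho : l = o
    · subst ho; rw [par_leafo]; tauto
    · by_cases h2 : 2 ≤ B.card
      · rw [par_leafB ho h2]; tauto
      · rw [par_leafB1 ho h2]; tauto
  · by_cases h2 : 2 ≤ A.card
    · rw [par_leafA2 h2]; tauto
    · rw [par_leafA1 h2]; tauto

abbrev GV (o : ℕ) (B A : Finset ℕ) : Type := {x : ℕ × ℕ // x ∈ F o B A}

instance : Fintype (GV o B A) := by unfold GV; infer_instance

def parV (o : ℕ) (B A : Finset ℕ) : GV o B A → GV o B A :=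
  fun v => ⟨par o B A v.1, par_mem v.2⟩

def depV (o : ℕ) (B A : Finset ℕ) : GV o B A → ℕ := fun v => dep o B A v.1

-- named vertices
lemma root_mem : ((0,0) : ℕ × ℕ) ∈ F o B A := by rw [mem_F_iff]; tauto
lemma b_mem : ((0,1) : ℕ × ℕ) ∈ F o B A := by rw [mem_F_iff]; tauto
lemma b'_mem (h2 : 2 ≤ B.card) : ((0,2) : ℕ × ℕ) ∈ F o B A := by rw [mem_F_iff]; tauto
lemma a_mem (h2 : 2 ≤ A.card) : ((0,3) : ℕ × ℕ) ∈ F o B A := by rw [mem_F_iff]; tauto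
lemma leafo_mem : ((3,o) : ℕ × ℕ) ∈ F o B A := by
  rw [mem_F_iff]; exact Or.inr (Or.inr (Or.inr (Or.inr (Or.inl ⟨o, Or.inl rfl, rfl⟩))))
lemma leafB_mem {l : ℕ} (hl : l ∈ B) : ((3,l) : ℕ × ℕ) ∈ F o B A := by
  rw [mem_F_iff]; exact Or.inr (Or.inr (Or.inr (Or.inr (Or.inl ⟨l, Or.inr hl, rfl⟩))))
lemma leafA_mem {l : ℕ} (hl : l ∈ A) : ((4,l) : ℕ × ℕ) ∈ F o B A := by
  rw [mem_F_iff]; exact Or.inr (Or.inr (Or.inr (Or.inr (Or.inr ⟨l, hl, rfl⟩))))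

def rt : GV o B A := ⟨(0,0), root_mem⟩

lemma hr_holds : parV o B A (rt : GV o B A) = rt := by
  apply Subtype.ext
  show par o B A (0,0) = (0,0)
  rfl

lemma hstep_holds : ∀ v : GV o B A, v ≠ rt → depV o B A v = depV o B A (parV o B A v) + 1 := by
  rintro ⟨x, hx⟩ hv
  have hx' := mem_F_iff.mp hx
  have hne : x ≠ (0,0) := fun h => hv (Subtype.ext h)
  show dep o B A x = dep o B A (par o B A x) + 1
  rcases hx' with rfl | rfl | ⟨rfl, hc⟩ | ⟨rfl, hc⟩ | ⟨l, hl, rfl⟩ | ⟨l, hl, rfl⟩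
  · exact absurd rfl hne
  · rw [par_b]; rfl
  · rw [par_b']; rfl
  · rw [par_a]; rfl
  · by_cases ho : l = o
    · subst ho; rw [par_leafo]; simp [dep]
    · by_cases h2 : 2 ≤ B.card
      · rw [par_leafB ho h2]; simp [dep, ho, h2]
      · rw [par_leafB1 ho h2]; simp [dep, ho, h2]
  · by_cases h2 : 2 ≤ A.card
    · rw [par_leafA2 h2]; simp [dep, h2]
    · rw [par_leafA1 h2]; simp [dep, h2]

def GG (o : ℕ) (B A : Finset ℕ) : SimpleGraph (GV o B A) := PTaux.ptG (parV o B A)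

lemma GG_isTree : (GG o B A).IsTree := PTaux.pt_isTree hr_holds hstep_holds

end Gad
namespace Gad
variable {o : ℕ} {B A : Finset ℕ}

lemma par_fst (x : ℕ × ℕ) : (par o B A x).1 = 0 := by
  unfold par
  split <;> first | rfl | (split_ifs <;> rfl)

lemma par3 {x : ℕ × ℕ} (hx : x ∈ F o B A) :
    par o B A (par o B A (par o B A x)) = (0,0) := by
  rw [mem_F_iff] at hx
  rcases hx with rfl | rfl | ⟨rfl, hc⟩ | ⟨rfl, hc⟩ | ⟨l, hl, rfl⟩ | ⟨l, hl, rfl⟩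
  · rfl
  · rfl
  · rfl
  · rfl
  · by_cases ho : l = o
    · subst ho; rw [par_leafo]; rfl
    · by_cases h2 : 2 ≤ B.card
      · rw [par_leafB ho h2]; rfl
      · rw [par_leafB1 ho h2]; rfl
  · by_cases h2 : 2 ≤ A.card
    · rw [par_leafA2 h2]; rfl
    · rw [par_leafA1 h2]; rfl

lemma parV3 (v : GV o B A) : parV o B A (parV o B A (parV o B A v)) = rt :=
  Subtype.ext (par3 v.2)

lemma anc_small {u v : GV o B A} :
    PTaux.Anc (parV o B A) u v ↔
      u = v ∨ u = parV o B A v ∨ u = parV o B A (parV o B A v) ∨ u = rt := by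
  constructor
  · rintro ⟨k, rfl⟩
    match k with
    | 0 => left; rfl
    | 1 => right; left; rfl
    | 2 => right; right; left; rfl
    | (k+3) =>
      right; right; right
      rw [Function.iterate_add_apply, show (parV o B A)^[3] v = rt from parV3 v]
      exact Function.iterate_fixed hr_holds k
  · rintro (rfl | rfl | rfl | rfl)
    · exact ⟨0, rfl⟩
    · exact ⟨1, rfl⟩
    · exact ⟨2, rfl⟩
    · exact ⟨3, parV3 v⟩

-- adjacency
lemma mkne {x y : ℕ × ℕ} {hx : x ∈ F o B A} {hy : y ∈ F o B A} (h : x ≠ y) :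
    (⟨x, hx⟩ : GV o B A) ≠ ⟨y, hy⟩ := fun he => h (congrArg Subtype.val he)

lemma parV_b : parV o B A ⟨(0,1), b_mem⟩ = rt := rfl
lemma parV_b'2 (h : ((0:ℕ),(2:ℕ)) ∈ F o B A) :
    parV o B A ⟨(0,2), h⟩ = ⟨(0,1), b_mem⟩ := rfl
lemma parV_a2 (h : ((0:ℕ),(3:ℕ)) ∈ F o B A) : parV o B A ⟨(0,3), h⟩ = rt := rfl
lemma parV_rt : parV o B A rt = rt := hr_holds
lemma parV_leafo (h : ((3:ℕ),o) ∈ F o B A) :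
    parV o B A ⟨(3,o), h⟩ = ⟨(0,1), b_mem⟩ := by
  apply Subtype.ext
  show par o B A (3,o) = (0,1)
  exact par_leafo
lemma parV_leafB {l : ℕ} (hlo : l ≠ o) (h2 : 2 ≤ B.card) (h : ((3:ℕ),l) ∈ F o B A) :
    parV o B A ⟨(3,l), h⟩ = ⟨(0,2), b'_mem h2⟩ := by
  apply Subtype.ext
  show par o B A (3,l) = (0,2)
  exact par_leafB hlo h2
lemma parV_leafB1 {l : ℕ} (hlo : l ≠ o) (h2 : ¬ 2 ≤ B.card) (h : ((3:ℕ),l) ∈ F o B A) :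
    parV o B A ⟨(3,l), h⟩ = ⟨(0,1), b_mem⟩ := by
  apply Subtype.ext
  show par o B A (3,l) = (0,1)
  exact par_leafB1 hlo h2
lemma parV_leafA2 {l : ℕ} (h2 : 2 ≤ A.card) (h : ((4:ℕ),l) ∈ F o B A) :
    parV o B A ⟨(4,l), h⟩ = ⟨(0,3), a_mem h2⟩ := by
  apply Subtype.ext
  show par o B A (4,l) = (0,3)
  exact par_leafA2 h2
lemma parV_leafA1 {l : ℕ} (h2 : ¬ 2 ≤ A.card) (h : ((4:ℕ),l) ∈ F o B A) :
    parV o B A ⟨(4,l), h⟩ = rt := by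
  apply Subtype.ext
  show par o B A (4,l) = (0,0)
  exact par_leafA1 h2

lemma adj_iff {u v : GV o B A} :
    (GG o B A).Adj u v ↔ u ≠ v ∧ (parV o B A u = v ∨ parV o B A v = u) := Iff.rfl

lemma nbhd_leaf {x : ℕ × ℕ} (hx : x ∈ F o B A) (h34 : x.1 = 3 ∨ x.1 = 4) :
    (GG o B A).neighborSet ⟨x, hx⟩ = {parV o B A ⟨x, hx⟩} := by
  have hpne : parV o B A ⟨x, hx⟩ ≠ ⟨x, hx⟩ := by
    intro h
    have hval : par o B A x = x := congrArg Subtype.val h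
    have hf := par_fst (o := o) (B := B) (A := A) x
    rw [hval] at hf
    rcases h34 with h' | h' <;> omega
  ext u
  rw [SimpleGraph.mem_neighborSet, adj_iff, Set.mem_singleton_iff]
  constructor
  · rintro ⟨hne, h | h⟩
    · exact h.symm
    · exfalso
      -- par of u cannot be a leaf code
      have hval : par o B A u.1 = x := congrArg Subtype.val h
      have hf := par_fst (o := o) (B := B) (A := A) u.1
      rw [hval] at hf
      rcases h34 with h' | h' <;> omega
  · rintro rfl
    exact ⟨fun h => hpne h.symm, Or.inl rfl⟩

lemma ncard_nbhd_leaf {x : ℕ × ℕ} (hx : x ∈ F o B A) (h34 : x.1 = 3 ∨ x.1 = 4) :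
    ((GG o B A).neighborSet ⟨x, hx⟩).ncard = 1 := by
  rw [nbhd_leaf hx h34]; exact Set.ncard_singleton _

lemma three_le_ncard_nbhd {v a b c : GV o B A} (hab : a ≠ b) (hac : a ≠ c) (hbc : b ≠ c)
    (ha : (GG o B A).Adj v a) (hb : (GG o B A).Adj v b) (hc : (GG o B A).Adj v c) :
    3 ≤ ((GG o B A).neighborSet v).ncard := by
  have hsub : ({a, b, c} : Set (GV o B A)) ⊆ (GG o B A).neighborSet v := by
    rintro u (rfl | rfl | rfl) <;> assumption
  have h3 : ({a, b, c} : Set (GV o B A)).ncard = 3 := by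
    rw [Set.ncard_insert_of_notMem (by simp [hab, hac]) (Set.toFinite _),
      Set.ncard_pair hbc]
  rw [← h3]
  exact Set.ncard_le_ncard hsub (Set.toFinite _)

section withHyps
variable (hB : B.Nonempty) (hoB : o ∉ B)

include hB hoB in
lemma ncard_nbhd_b : 3 ≤ ((GG o B A).neighborSet ⟨(0,1), b_mem⟩).ncard := by
  -- neighbors : root, leaf o, and either b' or the unique B leaf
  have hadj1 : (GG o B A).Adj ⟨(0,1), b_mem⟩ ⟨(0,0), root_mem⟩ := by
    refine ⟨mkne (by simp [Prod.ext_iff]), Or.inl parV_b⟩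
  have hadj2 : (GG o B A).Adj ⟨(0,1), b_mem⟩ ⟨(3,o), leafo_mem⟩ := by
    refine ⟨mkne (by simp [Prod.ext_iff]), Or.inr (parV_leafo _)⟩
  by_cases h2 : 2 ≤ B.card
  · have hadj3 : (GG o B A).Adj ⟨(0,1), b_mem⟩ ⟨(0,2), b'_mem h2⟩ := by
      refine ⟨mkne (by simp [Prod.ext_iff]), Or.inr (parV_b'2 _)⟩
    exact three_le_ncard_nbhd (mkne (by simp [Prod.ext_iff])) (mkne (by simp [Prod.ext_iff]))
      (mkne (by simp [Prod.ext_iff])) hadj1 hadj2 hadj3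
  · obtain ⟨l, hl⟩ := hB
    have hlo : l ≠ o := fun h => hoB (h ▸ hl)
    have hadj3 : (GG o B A).Adj ⟨(0,1), b_mem⟩ ⟨(3,l), leafB_mem hl⟩ := by
      refine ⟨mkne (by simp [Prod.ext_iff]), Or.inr (parV_leafB1 hlo h2 _)⟩
    exact three_le_ncard_nbhd (mkne (by simp [Prod.ext_iff])) (mkne (by simp [Prod.ext_iff]))
      (mkne (by simp [Prod.ext_iff]; exact fun h => hlo h.symm)) hadj1 hadj2 hadj3

include hoB in
lemma ncard_nbhd_b' (hmem : ((0:ℕ),(2:ℕ)) ∈ F o B A) :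
    3 ≤ ((GG o B A).neighborSet ⟨(0,2), hmem⟩).ncard := by
  have h2 : 2 ≤ B.card := by
    rw [mem_F_iff] at hmem
    simp [Prod.ext_iff] at hmem
    omega
  obtain ⟨l1, hl1, l2, hl2, hne⟩ := Finset.one_lt_card.mp h2
  have hlo1 : l1 ≠ o := fun h => hoB (h ▸ hl1)
  have hlo2 : l2 ≠ o := fun h => hoB (h ▸ hl2)
  have hadj1 : (GG o B A).Adj ⟨(0,2), hmem⟩ ⟨(0,1), b_mem⟩ := by
    refine ⟨mkne (by simp [Prod.ext_iff]), Or.inl (parV_b'2 _)⟩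
  have hadj2 : (GG o B A).Adj ⟨(0,2), hmem⟩ ⟨(3,l1), leafB_mem hl1⟩ := by
    refine ⟨mkne (by simp [Prod.ext_iff]), Or.inr (parV_leafB hlo1 h2 _)⟩
  have hadj3 : (GG o B A).Adj ⟨(0,2), hmem⟩ ⟨(3,l2), leafB_mem hl2⟩ := by
    refine ⟨mkne (by simp [Prod.ext_iff]), Or.inr (parV_leafB hlo2 h2 _)⟩
  exact three_le_ncard_nbhd (mkne (by simp [Prod.ext_iff])) (mkne (by simp [Prod.ext_iff]))
    (mkne (by simp [Prod.ext_iff, hne])) hadj1 hadj2 hadj3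

lemma ncard_nbhd_a (hmem : ((0:ℕ),(3:ℕ)) ∈ F o B A) :
    3 ≤ ((GG o B A).neighborSet ⟨(0,3), hmem⟩).ncard := by
  have h2 : 2 ≤ A.card := by
    rw [mem_F_iff] at hmem
    simp [Prod.ext_iff] at hmem
    omega
  obtain ⟨l1, hl1, l2, hl2, hne⟩ := Finset.one_lt_card.mp h2
  have hadj1 : (GG o B A).Adj ⟨(0,3), hmem⟩ ⟨(0,0), root_mem⟩ := by
    refine ⟨mkne (by simp [Prod.ext_iff]), Or.inl (parV_a2 _)⟩
  have hadj2 : (GG o B A).Adj ⟨(0,3), hmem⟩ ⟨(4,l1), leafA_mem hl1⟩ := by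
    refine ⟨mkne (by simp [Prod.ext_iff]), Or.inr (parV_leafA2 h2 _)⟩
  have hadj3 : (GG o B A).Adj ⟨(0,3), hmem⟩ ⟨(4,l2), leafA_mem hl2⟩ := by
    refine ⟨mkne (by simp [Prod.ext_iff]), Or.inr (parV_leafA2 h2 _)⟩
  exact three_le_ncard_nbhd (mkne (by simp [Prod.ext_iff])) (mkne (by simp [Prod.ext_iff]))
    (mkne (by simp [Prod.ext_iff, hne])) hadj1 hadj2 hadj3

end withHyps

def S0 (o : ℕ) (B A : Finset ℕ) : Set ℕ := insert o (↑B ∪ ↑A)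

def lab (o : ℕ) (B A : Finset ℕ) : S0 o B A → GV o B A := fun l =>
  if h : (l : ℕ) = o ∨ (l : ℕ) ∈ B then
    ⟨(3, (l : ℕ)), mem_F_iff.mpr (Or.inr (Or.inr (Or.inr (Or.inr (Or.inl ⟨l, h, rfl⟩)))))⟩
  else
    ⟨(4, (l : ℕ)), leafA_mem (by
      rcases l.2 with h' | h'
      · exact absurd (Or.inl h') h
      · rcases Set.mem_union _ _ _ |>.mp h' with h'' | h''
        · exact absurd (Or.inr h'') h
        · exact h'')⟩

lemma lab_fst (l : S0 o B A) : (lab o B A l).1.1 = 3 ∨ (lab o B A l).1.1 = 4 := by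
  unfold lab
  split_ifs <;> simp

lemma lab_B {l : ℕ} (hl : l ∈ B) (hmem : l ∈ S0 o B A) :
    lab o B A ⟨l, hmem⟩ = ⟨(3, l), leafB_mem hl⟩ := by
  unfold lab
  rw [dif_pos (Or.inr hl)]

lemma lab_O (hmem : o ∈ S0 o B A) :
    lab o B A ⟨o, hmem⟩ = ⟨(3, o), leafo_mem⟩ := by
  unfold lab
  rw [dif_pos (Or.inl rfl)]

lemma lab_A {l : ℕ} (hoA : o ∉ A) (hBA : Disjoint B A) (hl : l ∈ A) (hmem : l ∈ S0 o B A) :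
    lab o B A ⟨l, hmem⟩ = ⟨(4, l), leafA_mem hl⟩ := by
  unfold lab
  rw [dif_neg]
  push_neg
  constructor
  · intro h; exact hoA (h ▸ hl)
  · intro h; exact (Finset.disjoint_left.mp hBA h) hl

lemma lab_inj : Function.Injective (lab o B A) := by
  intro l l' h
  unfold lab at h
  split_ifs at h <;> (
    rw [Subtype.ext_iff, Prod.ext_iff] at h
    simp at h
    try exact Subtype.ext h)
  all_goals (exact Subtype.ext h.2)

end Gad
namespace Gad
variable {o : ℕ} {B A : Finset ℕ}

-- ancestor case analyses (value level)
lemma L_o {w : GV o B A} (hmem : ((3:ℕ),o) ∈ F o B A)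
    (h : PTaux.Anc (parV o B A) w ⟨(3,o), hmem⟩) :
    w.1 = (3,o) ∨ w.1 = (0,1) ∨ w.1 = (0,0) := by
  rw [anc_small, parV_leafo, parV_b] at h
  rcases h with rfl | rfl | rfl | rfl <;> simp [rt, Prod.ext_iff]

lemma L_B {w : GV o B A} {l : ℕ} (hlo : l ≠ o) (hmem : ((3:ℕ),l) ∈ F o B A)
    (h : PTaux.Anc (parV o B A) w ⟨(3,l), hmem⟩) :
    w.1 = (3,l) ∨ w.1 = (0,2) ∨ w.1 = (0,1) ∨ w.1 = (0,0) := by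
  rw [anc_small] at h
  by_cases h2 : 2 ≤ B.card
  · rw [parV_leafB hlo h2, parV_b'2] at h
    rcases h with rfl | rfl | rfl | rfl <;> simp [rt, Prod.ext_iff]
  · rw [parV_leafB1 hlo h2, parV_b] at h
    rcases h with rfl | rfl | rfl | rfl <;> simp [rt, Prod.ext_iff]

lemma L_A {w : GV o B A} {l : ℕ} (hmem : ((4:ℕ),l) ∈ F o B A)
    (h : PTaux.Anc (parV o B A) w ⟨(4,l), hmem⟩) :
    w.1 = (4,l) ∨ w.1 = (0,3) ∨ w.1 = (0,0) := by
  rw [anc_small] at h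
  by_cases h2 : 2 ≤ A.card
  · rw [parV_leafA2 h2, parV_a2] at h
    rcases h with rfl | rfl | rfl | rfl <;> simp [rt, Prod.ext_iff]
  · rw [parV_leafA1 h2, parV_rt] at h
    rcases h with rfl | rfl | rfl | rfl <;> simp [rt, Prod.ext_iff]

-- ancestor builders
lemma U_b {w : GV o B A} (h : w.1 = (0,1) ∨ w.1 = (0,0)) :
    PTaux.Anc (parV o B A) w ⟨(0,1), b_mem⟩ := by
  rcases h with h | h
  · exact ⟨0, (Subtype.ext h).symm⟩
  · exact ⟨1, by simpa using (parV_b.trans (Subtype.ext h.symm))⟩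

lemma U_b' {w : GV o B A} (hmem : ((0:ℕ),(2:ℕ)) ∈ F o B A)
    (h : w.1 = (0,2) ∨ w.1 = (0,1) ∨ w.1 = (0,0)) :
    PTaux.Anc (parV o B A) w ⟨(0,2), hmem⟩ := by
  rcases h with h | h | h
  · exact ⟨0, (Subtype.ext h).symm⟩
  · exact ⟨1, by simpa using ((parV_b'2 hmem).trans (Subtype.ext h.symm))⟩
  · refine ⟨2, ?_⟩
    show parV o B A (parV o B A ⟨(0,2), hmem⟩) = w
    rw [parV_b'2, parV_b]
    exact Subtype.ext h.symm
lemma U_a {w : GV o B A} (hmem : ((0:ℕ),(3:ℕ)) ∈ F o B A)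
    (h : w.1 = (0,3) ∨ w.1 = (0,0)) :
    PTaux.Anc (parV o B A) w ⟨(0,3), hmem⟩ := by
  rcases h with h | h
  · exact ⟨0, (Subtype.ext h).symm⟩
  · exact ⟨1, by simpa using ((parV_a2 hmem).trans (Subtype.ext h.symm))⟩

lemma U_rt {w : GV o B A} (h : w.1 = (0,0)) : PTaux.Anc (parV o B A) w rt :=
  ⟨0, (Subtype.ext h).symm⟩

-- ancestor facts
lemma A_b_leafo (hmem : ((3:ℕ),o) ∈ F o B A) :
    PTaux.Anc (parV o B A) ⟨(0,1), b_mem⟩ ⟨(3,o), hmem⟩ :=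
  ⟨1, by simpa using parV_leafo hmem⟩

lemma A_b'_leafB {l : ℕ} (hlo : l ≠ o) (h2 : 2 ≤ B.card) (hmem : ((3:ℕ),l) ∈ F o B A) :
    PTaux.Anc (parV o B A) ⟨(0,2), b'_mem h2⟩ ⟨(3,l), hmem⟩ :=
  ⟨1, by simpa using parV_leafB hlo h2 hmem⟩

lemma A_b_leafB {l : ℕ} (hlo : l ≠ o) (hmem : ((3:ℕ),l) ∈ F o B A) :
    PTaux.Anc (parV o B A) ⟨(0,1), b_mem⟩ ⟨(3,l), hmem⟩ := by
  by_cases h2 : 2 ≤ B.card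
  · refine ⟨2, ?_⟩
    show parV o B A (parV o B A ⟨(3,l), hmem⟩) = _
    rw [parV_leafB hlo h2, parV_b'2]
  · exact ⟨1, by simpa using parV_leafB1 hlo h2 hmem⟩

lemma A_a_leafA {l : ℕ} (h2 : 2 ≤ A.card) (hmem : ((4:ℕ),l) ∈ F o B A) :
    PTaux.Anc (parV o B A) ⟨(0,3), a_mem h2⟩ ⟨(4,l), hmem⟩ :=
  ⟨1, by simpa using parV_leafA2 h2 hmem⟩

lemma A_rt_any (v : GV o B A) : PTaux.Anc (parV o B A) rt v := ⟨3, parV3 v⟩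

-- membership in the label set
lemma mem_S0_o : o ∈ S0 o B A := Set.mem_insert _ _
lemma mem_S0_B {l : ℕ} (hl : l ∈ B) : l ∈ S0 o B A :=
  Set.mem_insert_of_mem _ (Set.mem_union_left _ (by simpa using hl))
lemma mem_S0_A {l : ℕ} (hl : l ∈ A) : l ∈ S0 o B A :=
  Set.mem_insert_of_mem _ (Set.mem_union_right _ (by simpa using hl))

section gadget
variable (o B A)
variable (hB : B.Nonempty) (hoB : o ∉ B) (hoA : o ∉ A) (hBA : Disjoint B A)

@[reducible] def gadT : RTree ℕ (S0 o B A) where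
  V := GV o B A
  fV := inferInstance
  G := GG o B A
  isTree := GG_isTree
  root := rt
  label := lab o B A
  labelInj := lab_inj
  leafIff := by
    rintro ⟨x, hx⟩
    have hx' := mem_F_iff.mp hx
    rcases hx' with rfl | rfl | ⟨rfl, hc⟩ | ⟨rfl, hc⟩ | ⟨l, hl, rfl⟩ | ⟨l, hl, rfl⟩
    · -- root
      apply iff_of_false
      · rintro ⟨l, hlab⟩
        have := lab_fst l
        rw [hlab] at this
        simp at this
      · rintro ⟨-, hne⟩
        exact hne rfl
    · -- b
      apply iff_of_false
      · rintro ⟨l, hlab⟩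
        have := lab_fst l
        rw [hlab] at this
        simp at this
      · rintro ⟨h1, -⟩
        have := ncard_nbhd_b (A := A) hB hoB
        omega
    · -- b'
      apply iff_of_false
      · rintro ⟨l, hlab⟩
        have := lab_fst l
        rw [hlab] at this
        simp at this
      · rintro ⟨h1, -⟩
        have := ncard_nbhd_b' hoB hx
        omega
    · -- a
      apply iff_of_false
      · rintro ⟨l, hlab⟩
        have := lab_fst l
        rw [hlab] at this
        simp at this
      · rintro ⟨h1, -⟩
        have := ncard_nbhd_a hx
        omega
    · -- leaf (3,l)
      apply iff_of_true
      · have hmem : l ∈ S0 o B A := by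
          rcases hl with rfl | hl
          · exact mem_S0_o
          · exact mem_S0_B hl
        refine ⟨⟨l, hmem⟩, ?_⟩
        unfold lab
        rw [dif_pos hl]
      · exact ⟨ncard_nbhd_leaf hx (Or.inl rfl), mkne (by simp [Prod.ext_iff])⟩
    · -- leaf (4,l)
      apply iff_of_true
      · have hmem : l ∈ S0 o B A := mem_S0_A hl
        refine ⟨⟨l, hmem⟩, ?_⟩
        unfold lab
        rw [dif_neg]
        push_neg
        constructor
        · intro h; exact hoA (h ▸ hl)
        · intro h; exact (Finset.disjoint_left.mp hBA h) hl
      · exact ⟨ncard_nbhd_leaf hx (Or.inr rfl), mkne (by simp [Prod.ext_iff])⟩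
  noDeg2 := by
    rintro ⟨x, hx⟩ hne
    have hx' := mem_F_iff.mp hx
    rcases hx' with rfl | rfl | ⟨rfl, hc⟩ | ⟨rfl, hc⟩ | ⟨l, hl, rfl⟩ | ⟨l, hl, rfl⟩
    · exact absurd rfl hne
    · have := ncard_nbhd_b (A := A) hB hoB
      omega
    · have := ncard_nbhd_b' hoB hx
      omega
    · have := ncard_nbhd_a hx
      omega
    · rw [ncard_nbhd_leaf hx (Or.inl rfl)]; omega
    · rw [ncard_nbhd_leaf hx (Or.inr rfl)]; omega

lemma gad_anc_iff {u v : GV o B A} :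
    (gadT o B A hB hoB hoA hBA).anc u v ↔ PTaux.Anc (parV o B A) u v :=
  PTaux.pt_anc_iff hr_holds hstep_holds

lemma gad_label_B {l : ℕ} (hl : l ∈ B) (hmem : l ∈ S0 o B A) :
    (gadT o B A hB hoB hoA hBA).label ⟨l, hmem⟩ = ⟨(3,l), leafB_mem hl⟩ :=
  lab_B hl hmem

lemma gad_label_O (hmem : o ∈ S0 o B A) :
    (gadT o B A hB hoB hoA hBA).label ⟨o, hmem⟩ = ⟨(3,o), leafo_mem⟩ :=
  lab_O hmem

lemma gad_label_A {l : ℕ} (hl : l ∈ A) (hmem : l ∈ S0 o B A) :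
    (gadT o B A hB hoB hoA hBA).label ⟨l, hmem⟩ = ⟨(4,l), leafA_mem hl⟩ :=
  lab_A hoA hBA hl hmem

end gadget
end Gad
namespace Gad
variable {o : ℕ} {B A : Finset ℕ}

section disp
variable (o B A)
variable (hB : B.Nonempty) (hoB : o ∉ B) (hoA : o ∉ A) (hBA : Disjoint B A)

local notation "TT" => gadT o B A hB hoB hoA hBA

lemma disp_BB {x y : ℕ} (hx : x ∈ B) (hy : y ∈ B) (hxy : x ≠ y) :
    (TT).displays3 x y o := by
  have h2 : 2 ≤ B.card := Finset.one_lt_card.mpr ⟨x, hx, y, hy, hxy⟩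
  have hxo : x ≠ o := fun h => hoB (h ▸ hx)
  have hyo : y ≠ o := fun h => hoB (h ▸ hy)
  refine ⟨mem_S0_B hx, mem_S0_B hy, mem_S0_o, ⟨(0,2), b'_mem h2⟩, ⟨(0,1), b_mem⟩,
    ?_, ?_, ?_, ?_⟩
  · rw [gad_label_B o B A hB hoB hoA hBA hx, gad_label_B o B A hB hoB hoA hBA hy]
    constructor
    · intro v hv
      simp only [Set.mem_insert_iff, Set.mem_singleton_iff] at hv
      rw [gad_anc_iff]
      rcases hv with rfl | rfl
      · exact A_b'_leafB hxo h2 _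
      · exact A_b'_leafB hyo h2 _
    · intro w hw
      have hwx := hw _ (Set.mem_insert _ _)
      have hwy := hw _ (Set.mem_insert_of_mem _ (Set.mem_singleton _))
      rw [gad_anc_iff] at hwx hwy ⊢
      rcases L_B hxo _ hwx with h1 | h1 | h1 | h1
      · rcases L_B hyo _ hwy with h2' | h2' | h2' | h2'
        · rw [h1] at h2'; simp [Prod.ext_iff] at h2'; exact absurd h2' hxy
        · exact U_b' _ (Or.inl h2')
        · exact U_b' _ (Or.inr (Or.inl h2'))
        · exact U_b' _ (Or.inr (Or.inr h2'))
      · exact U_b' _ (Or.inl h1)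
      · exact U_b' _ (Or.inr (Or.inl h1))
      · exact U_b' _ (Or.inr (Or.inr h1))
  · rw [gad_label_B o B A hB hoB hoA hBA hx, gad_label_B o B A hB hoB hoA hBA hy,
      gad_label_O o B A hB hoB hoA hBA]
    constructor
    · intro v hv
      simp only [Set.mem_insert_iff, Set.mem_singleton_iff] at hv
      rw [gad_anc_iff]
      rcases hv with rfl | rfl | rfl
      · exact A_b_leafB hxo _
      · exact A_b_leafB hyo _
      · exact A_b_leafo _
    · intro w hw
      have hwx := hw _ (Set.mem_insert _ _)
      have hwo := hw _ (Set.mem_insert_of_mem _ (Set.mem_insert_of_mem _ (Set.mem_singleton _)))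
      rw [gad_anc_iff] at hwx hwo ⊢
      rcases L_o _ hwo with h1 | h1 | h1
      · rcases L_B hxo _ hwx with h2' | h2' | h2' | h2' <;> rw [h1] at h2' <;>
          simp [Prod.ext_iff] at h2'
        exact absurd h2' (Ne.symm hxo)
      · exact U_b (Or.inl h1)
      · exact U_b (Or.inr h1)
  · rw [gad_anc_iff]
    exact U_b' _ (Or.inr (Or.inl rfl))
  · exact mkne (by simp [Prod.ext_iff])

lemma disp_AA {x y : ℕ} (hx : x ∈ A) (hy : y ∈ A) (hxy : x ≠ y) :
    (TT).displays3 x y o := by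
  have h2 : 2 ≤ A.card := Finset.one_lt_card.mpr ⟨x, hx, y, hy, hxy⟩
  refine ⟨mem_S0_A hx, mem_S0_A hy, mem_S0_o, ⟨(0,3), a_mem h2⟩, rt,
    ?_, ?_, ?_, ?_⟩
  · rw [gad_label_A o B A hB hoB hoA hBA hx, gad_label_A o B A hB hoB hoA hBA hy]
    constructor
    · intro v hv
      simp only [Set.mem_insert_iff, Set.mem_singleton_iff] at hv
      rw [gad_anc_iff]
      rcases hv with rfl | rfl
      · exact A_a_leafA h2 _
      · exact A_a_leafA h2 _
    · intro w hw
      have hwx := hw _ (Set.mem_insert _ _)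
      have hwy := hw _ (Set.mem_insert_of_mem _ (Set.mem_singleton _))
      rw [gad_anc_iff] at hwx hwy ⊢
      rcases L_A _ hwx with h1 | h1 | h1
      · rcases L_A _ hwy with h2' | h2' | h2'
        · rw [h1] at h2'; simp [Prod.ext_iff] at h2'; exact absurd h2' hxy
        · exact U_a _ (Or.inl h2')
        · exact U_a _ (Or.inr h2')
      · exact U_a _ (Or.inl h1)
      · exact U_a _ (Or.inr h1)
  · rw [gad_label_A o B A hB hoB hoA hBA hx, gad_label_A o B A hB hoB hoA hBA hy,
      gad_label_O o B A hB hoB hoA hBA]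
    constructor
    · intro v hv
      simp only [Set.mem_insert_iff, Set.mem_singleton_iff] at hv
      rw [gad_anc_iff]
      rcases hv with rfl | rfl | rfl <;> exact A_rt_any _
    · intro w hw
      have hwx := hw _ (Set.mem_insert _ _)
      have hwo := hw _ (Set.mem_insert_of_mem _ (Set.mem_insert_of_mem _ (Set.mem_singleton _)))
      rw [gad_anc_iff] at hwx hwo ⊢
      rcases L_o _ hwo with h1 | h1 | h1 <;> rcases L_A _ hwx with h2' | h2' | h2' <;>
        (try (rw [h1] at h2'; simp [Prod.ext_iff] at h2'))
      exact U_rt h1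
  · rw [gad_anc_iff]
    exact U_a _ (Or.inr rfl)
  · exact mkne (by simp [Prod.ext_iff])

lemma disp_OB {x c : ℕ} (hx : x ∈ B) (hc : c ∈ A) :
    (TT).displays3 o x c := by
  have hxo : x ≠ o := fun h => hoB (h ▸ hx)
  refine ⟨mem_S0_o, mem_S0_B hx, mem_S0_A hc, ⟨(0,1), b_mem⟩, rt,
    ?_, ?_, ?_, ?_⟩
  · rw [gad_label_B o B A hB hoB hoA hBA hx, gad_label_O o B A hB hoB hoA hBA]
    constructor
    · intro v hv
      simp only [Set.mem_insert_iff, Set.mem_singleton_iff] at hv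
      rw [gad_anc_iff]
      rcases hv with rfl | rfl
      · exact A_b_leafo _
      · exact A_b_leafB hxo _
    · intro w hw
      have hwo := hw _ (Set.mem_insert _ _)
      have hwx := hw _ (Set.mem_insert_of_mem _ (Set.mem_singleton _))
      rw [gad_anc_iff] at hwx hwo ⊢
      rcases L_o _ hwo with h1 | h1 | h1
      · rcases L_B hxo _ hwx with h2' | h2' | h2' | h2' <;> rw [h1] at h2' <;>
          simp [Prod.ext_iff] at h2'
        exact absurd h2' (Ne.symm hxo)
      · exact U_b (Or.inl h1)
      · exact U_b (Or.inr h1)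
  · rw [gad_label_B o B A hB hoB hoA hBA hx, gad_label_O o B A hB hoB hoA hBA,
      gad_label_A o B A hB hoB hoA hBA hc]
    constructor
    · intro v hv
      simp only [Set.mem_insert_iff, Set.mem_singleton_iff] at hv
      rw [gad_anc_iff]
      rcases hv with rfl | rfl | rfl <;> exact A_rt_any _
    · intro w hw
      have hwo := hw _ (Set.mem_insert _ _)
      have hwc := hw _ (Set.mem_insert_of_mem _ (Set.mem_insert_of_mem _ (Set.mem_singleton _)))
      rw [gad_anc_iff] at hwo hwc ⊢
      rcases L_o _ hwo with h1 | h1 | h1 <;> rcases L_A _ hwc with h2' | h2' | h2' <;>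
        (try (rw [h1] at h2'; simp [Prod.ext_iff] at h2'))
      exact U_rt h1
  · rw [gad_anc_iff]
    exact U_b (Or.inr rfl)
  · exact mkne (by simp [Prod.ext_iff])

end disp
end Gad
namespace Main

def t1 (n : ℕ) : Sym2 ℕ × ℕ := (s(1, 2), n)
def ti (i : ℕ) : Sym2 ℕ × ℕ := (s(i, i+1), 1)
def Rn (n : ℕ) : Set (Sym2 ℕ × ℕ) := insert (t1 n) (ti '' Set.Ico 2 n)

variable {n : ℕ}

lemma mem_Rn_elim {t : Sym2 ℕ × ℕ} (ht : t ∈ Rn n) :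
    t = t1 n ∨ ∃ i, 2 ≤ i ∧ i < n ∧ t = ti i := by
  rcases ht with rfl | ⟨i, hi, rfl⟩
  · exact Or.inl rfl
  · rw [Set.mem_Ico] at hi
    exact Or.inr ⟨i, hi.1, hi.2, rfl⟩

lemma triplets_Rn (hn : 3 ≤ n) : ∀ t ∈ Rn n, IsTriplet t := by
  intro t ht
  rcases mem_Rn_elim ht with rfl | ⟨i, h2, hin, rfl⟩
  · exact ⟨1, 2, n, by omega, by omega, by omega, rfl⟩
  · exact ⟨i, i+1, 1, by omega, by omega, by omega, rfl⟩

lemma labels_Rn (hn : 3 ≤ n) : tLabelSet (Rn n) = Set.Icc 1 n := by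
  ext x
  simp only [tLabelSet, Set.mem_setOf_eq, Set.mem_Icc]
  constructor
  · rintro ⟨t, ht, hx⟩
    rcases mem_Rn_elim ht with rfl | ⟨i, h2, hin, rfl⟩
    · rcases hx with hx | hx
      · rw [show (t1 n).1 = s(1,2) from rfl, Sym2.mem_iff] at hx
        rcases hx with rfl | rfl <;> omega
      · rw [show (t1 n).2 = n from rfl] at hx
        omega
    · rcases hx with hx | hx
      · rw [show (ti i).1 = s(i,i+1) from rfl, Sym2.mem_iff] at hx
        rcases hx with rfl | rfl <;> omega
      · rw [show (ti i).2 = 1 from rfl] at hx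
        omega
  · rintro ⟨h1, h2⟩
    by_cases hxn : x = n
    · exact ⟨t1 n, Set.mem_insert _ _, Or.inr hxn⟩
    · by_cases hx1 : x = 1
      · exact ⟨ti 2, Set.mem_insert_of_mem _ ⟨2, Set.mem_Ico.mpr ⟨le_rfl, by omega⟩, rfl⟩,
          Or.inr hx1⟩
      · exact ⟨ti x, Set.mem_insert_of_mem _ ⟨x, Set.mem_Ico.mpr ⟨by omega, by omega⟩, rfl⟩,
          Or.inl (Sym2.mem_iff.mpr (Or.inl rfl))⟩

lemma ncard_labels_Rn (hn : 3 ≤ n) : (tLabelSet (Rn n)).ncard = n := by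
  rw [labels_Rn hn, ← Finset.coe_Icc, Set.ncard_coe_finset, Nat.card_Icc]
  omega

lemma ncard_Rn (hn : 3 ≤ n) : (Rn n).ncard = n - 1 := by
  have hinj : Set.InjOn ti (Set.Ico 2 n) := by
    intro i hi j hj h
    rw [Set.mem_Ico] at hi hj
    have h1 : s(i, i+1) = s(j, j+1) := congrArg Prod.fst h
    rw [Sym2.eq_iff] at h1
    rcases h1 with ⟨h', -⟩ | ⟨h', h''⟩
    · exact h'
    · omega
  have hmem : t1 n ∉ ti '' Set.Ico 2 n := by
    rintro ⟨i, hi, h⟩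
    have := congrArg Prod.snd h
    rw [show (ti i).2 = 1 from rfl, show (t1 n).2 = n from rfl] at this
    omega
  rw [Rn, Set.ncard_insert_of_notMem hmem ((Set.finite_Ico _ _).image _),
    Set.ncard_image_of_injOn hinj, ← Finset.coe_Ico, Set.ncard_coe_finset, Nat.card_Ico]
  omega

lemma tLabelSet_mono {R1 R2 : Set (Sym2 ℕ × ℕ)} (h : R1 ⊆ R2) :
    tLabelSet R1 ⊆ tLabelSet R2 := by
  rintro x ⟨t, ht, hx⟩
  exact ⟨t, h ht, hx⟩

/-- Incompatibility of `Rn`. -/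
lemma incompat_Rn (hn : 3 ≤ n) {S : Set ℕ} (T : RTree ℕ S)
    (hT : ∀ t ∈ Rn n, T.displays t) : False := by
  have disp : ∀ i, 2 ≤ i → i < n → T.displays3 i (i+1) 1 := by
    intro i h1 h2
    exact hT (ti i) (Set.mem_insert_of_mem _ ⟨i, Set.mem_Ico.mpr ⟨h1, h2⟩, rfl⟩) i (i+1) 1 rfl
  obtain ⟨ha2, hb2, hc2, m2, M2, hm2, hM2, hanc2, hne2⟩ := disp 2 le_rfl (by omega)
  obtain ⟨hd2a, hd2b⟩ := T.mrca_derived hm2 hM2 hanc2 hne2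
  have claim : ∀ j, 3 ≤ j → j ≤ n → ∀ (hj : (j:ℕ) ∈ S) (h1 : (1:ℕ) ∈ S),
      T.isMRCA {T.label ⟨j, hj⟩, T.label ⟨1, h1⟩} M2 := by
    intro j hj3
    induction j, hj3 using Nat.le_induction with
    | base =>
      intro _ hj h1
      exact hd2a
    | succ j hj ih =>
      intro hjn hj1 h1
      obtain ⟨ha, hb, hc, m, M, hm, hM, hanc, hne⟩ := disp j (by omega) (by omega)
      obtain ⟨hda, hdb⟩ := T.mrca_derived hm hM hanc hne
      have hIH := ih (by omega) ha hc
      have heq : M = M2 := T.mrca_unique hdb hIH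
      rw [heq] at hda
      exact hda
  have dispt1 : T.displays3 1 2 n := hT (t1 n) (Set.mem_insert _ _) 1 2 n rfl
  obtain ⟨h1', h2', hn', m', M', hm', hM', hanc', hne'⟩ := dispt1
  obtain ⟨hda', hdb'⟩ := T.mrca_derived hm' hM' hanc' hne'
  have hfin := claim n (by omega) le_rfl hn' h1'
  have e1 : m' = M2 := by
    apply T.mrca_unique hm'
    rw [Set.pair_comm]
    exact hd2b
  have e2 : M' = M2 := by
    apply T.mrca_unique hdb'
    rw [Set.pair_comm]
    exact hfin
  exact hne' (e2.trans e1.symm)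

/-- the empty set of triplets is compatible -/
lemma rcompat_empty : RCompat (tLabelSet (∅ : Set (Sym2 ℕ × ℕ))) ∅ := by
  have h : tLabelSet (∅ : Set (Sym2 ℕ × ℕ)) = ∅ := by
    ext x; simp [tLabelSet]
  rw [h]
  refine ⟨⟨Unit, inferInstance, ⊥, ⟨?_, ?_⟩, (), fun _ => (),
    fun a => absurd a.2 (Set.notMem_empty _), ?_, ?_⟩, fun t ht => absurd ht (Set.notMem_empty _)⟩
  · constructor
    intro a b
    rw [Subsingleton.elim a b]
  · intro v c hc
    cases c with
    | nil => exact hc.ne_nil rfl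
    | cons h q => exact h.elim
  · intro v
    constructor
    · rintro ⟨l, -⟩
      exact absurd l.2 (Set.notMem_empty _)
    · rintro ⟨h1, -⟩
      have hnb : (⊥ : SimpleGraph Unit).neighborSet v = ∅ := by
        ext u; simp
      rw [hnb] at h1
      simp at h1
  · intro v _
    have hnb : (⊥ : SimpleGraph Unit).neighborSet v = ∅ := by
      ext u; simp
    rw [hnb]
    simp

lemma compat_core (hn : 3 ≤ n) (R' : Set (Sym2 ℕ × ℕ)) (hsub : R' ⊆ Rn n)
    (hne : R'.Nonempty) (j : ℕ) (hj2 : 2 ≤ j) (hjn : j ≤ n)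
    (hjt1 : t1 n ∈ R' → j < n)
    (hjti : ∀ i, ti i ∈ R' → i ≠ j)
    (halt : t1 n ∈ R' ∨ j = n) :
    RCompat (tLabelSet R') R' := by
  classical
  set S' := tLabelSet R' with hS'def
  have hlab : ∀ t ∈ R', ∀ x : ℕ, (x ∈ t.1 ∨ x = t.2) → x ∈ S' := fun t ht x hx => ⟨t, ht, hx⟩
  have hcases : ∀ t ∈ R', t = t1 n ∨ ∃ i, 2 ≤ i ∧ i < n ∧ ti i ∈ R' ∧ t = ti i := by
    intro t ht
    rcases mem_Rn_elim (hsub ht) with rfl | ⟨i, h2, hin, rfl⟩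
    · exact Or.inl rfl
    · exact Or.inr ⟨i, h2, hin, ht, rfl⟩
  have hS'Icc : S' ⊆ Set.Icc 1 n := by
    intro x hx
    have := tLabelSet_mono hsub hx
    rwa [labels_Rn hn] at this
  have h1S' : (1:ℕ) ∈ S' := by
    obtain ⟨t, ht⟩ := hne
    rcases hcases t ht with rfl | ⟨i, h2, hin, hti, rfl⟩
    · exact hlab _ ht 1 (Or.inl (Sym2.mem_iff.mpr (Or.inl rfl)))
    · exact hlab _ ht 1 (Or.inr rfl)
  set B : Finset ℕ := (Finset.Icc 2 j).filter (· ∈ S') with hBdef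
  set A : Finset ℕ := (Finset.Icc (j+1) n).filter (· ∈ S') with hAdef
  have hmemB : ∀ x, x ∈ B ↔ 2 ≤ x ∧ x ≤ j ∧ x ∈ S' := by
    intro x
    rw [hBdef, Finset.mem_filter, Finset.mem_Icc]
    tauto
  have hmemA : ∀ x, x ∈ A ↔ j+1 ≤ x ∧ x ≤ n ∧ x ∈ S' := by
    intro x
    rw [hAdef, Finset.mem_filter, Finset.mem_Icc]
    tauto
  have hB : B.Nonempty := by
    rcases halt with ht1 | rfl
    · exact ⟨2, (hmemB 2).mpr ⟨le_rfl, hj2,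
        hlab _ ht1 2 (Or.inl (Sym2.mem_iff.mpr (Or.inr rfl)))⟩⟩
    · obtain ⟨t, ht⟩ := hne
      rcases hcases t ht with rfl | ⟨i, h2, hin, hti, rfl⟩
      · exact ⟨2, (hmemB 2).mpr ⟨le_rfl, hj2,
          hlab _ ht 2 (Or.inl (Sym2.mem_iff.mpr (Or.inr rfl)))⟩⟩
      · exact ⟨i, (hmemB i).mpr ⟨h2, by omega,
          hlab _ ht i (Or.inl (Sym2.mem_iff.mpr (Or.inl rfl)))⟩⟩
  have hoB : 1 ∉ B := fun h => by have := (hmemB 1).mp h; omega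
  have hoA : 1 ∉ A := fun h => by have := (hmemA 1).mp h; omega
  have hBA : Disjoint B A := by
    rw [Finset.disjoint_left]
    intro x hxB hxA
    have h1 := (hmemB x).mp hxB
    have h2 := (hmemA x).mp hxA
    omega
  have hSeq : S' = Gad.S0 1 B A := by
    ext x
    simp only [Gad.S0, Set.mem_insert_iff, Set.mem_union, Finset.mem_coe]
    constructor
    · intro hx
      have hxIcc := hS'Icc hx
      rw [Set.mem_Icc] at hxIcc
      by_cases h1 : x = 1
      · exact Or.inl h1
      · right
        by_cases hle : x ≤ j
        · exact Or.inl ((hmemB x).mpr ⟨by omega, hle, hx⟩)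
        · exact Or.inr ((hmemA x).mpr ⟨by omega, hxIcc.2, hx⟩)
    · rintro (rfl | hx | hx)
      · exact h1S'
      · exact ((hmemB x).mp hx).2.2
      · exact ((hmemA x).mp hx).2.2
  rw [hSeq]
  refine ⟨Gad.gadT 1 B A hB hoB hoA hBA, ?_⟩
  intro t ht
  rcases hcases t ht with rfl | ⟨i, h2, hin, hti, rfl⟩
  · -- t = t1 n
    have hjlt := hjt1 ht
    have h2B : 2 ∈ B := (hmemB 2).mpr ⟨le_rfl, hj2,
      hlab _ ht 2 (Or.inl (Sym2.mem_iff.mpr (Or.inr rfl)))⟩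
    have hnA : n ∈ A := (hmemA n).mpr ⟨by omega, le_rfl, hlab _ ht n (Or.inr rfl)⟩
    intro x y z heq
    rw [t1, Prod.mk.injEq] at heq
    obtain ⟨hxy, hz⟩ := heq
    subst hz
    rw [Sym2.eq_iff] at hxy
    rcases hxy with ⟨hx, hy⟩ | ⟨hx, hy⟩
    · subst hx; subst hy
      exact Gad.disp_OB 1 B A hB hoB hoA hBA h2B hnA
    · subst hx; subst hy
      exact RTree.displays3_swap _ (Gad.disp_OB 1 B A hB hoB hoA hBA h2B hnA)
  · -- t = ti i
    have hiS : i ∈ S' := hlab _ ht i (Or.inl (Sym2.mem_iff.mpr (Or.inl rfl)))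
    have hi1S : i+1 ∈ S' := hlab _ ht (i+1) (Or.inl (Sym2.mem_iff.mpr (Or.inr rfl)))
    have hij := hjti i hti
    intro x y z heq
    rw [ti, Prod.mk.injEq] at heq
    obtain ⟨hxy, hz⟩ := heq
    subst hz
    rw [Sym2.eq_iff] at hxy
    by_cases hlt : i < j
    · have hiB : i ∈ B := (hmemB i).mpr ⟨h2, by omega, hiS⟩
      have hi1B : i+1 ∈ B := (hmemB (i+1)).mpr ⟨by omega, by omega, hi1S⟩
      rcases hxy with ⟨hx, hy⟩ | ⟨hx, hy⟩
      · subst hx; subst hy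
        exact Gad.disp_BB 1 B A hB hoB hoA hBA hiB hi1B (by omega)
      · subst hx; subst hy
        exact RTree.displays3_swap _ (Gad.disp_BB 1 B A hB hoB hoA hBA hiB hi1B (by omega))
    · have hiA : i ∈ A := (hmemA i).mpr ⟨by omega, by omega, hiS⟩
      have hi1A : i+1 ∈ A := (hmemA (i+1)).mpr ⟨by omega, by omega, hi1S⟩
      rcases hxy with ⟨hx, hy⟩ | ⟨hx, hy⟩
      · subst hx; subst hy
        exact Gad.disp_AA 1 B A hB hoB hoA hBA hiA hi1A (by omega)
      · subst hx; subst hy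
        exact RTree.displays3_swap _ (Gad.disp_AA 1 B A hB hoB hoA hBA hiA hi1A (by omega))

lemma ti_mem_lt (hn : 3 ≤ n) {i : ℕ} (h : ti i ∈ Rn n) : 2 ≤ i ∧ i < n := by
  rcases mem_Rn_elim h with habs | ⟨i', h2, hlt, hEq⟩
  · have := congrArg Prod.snd habs
    rw [show (ti i).2 = 1 from rfl, show (t1 n).2 = n from rfl] at this
    omega
  · have h1 : s(i, i+1) = s(i', i'+1) := congrArg Prod.fst hEq
    rw [Sym2.eq_iff] at h1
    rcases h1 with ⟨rfl, -⟩ | ⟨h', h''⟩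
    · exact ⟨h2, hlt⟩
    · omega

lemma compat_subset (hn : 3 ≤ n) (R' : Set (Sym2 ℕ × ℕ)) (hss : R' ⊂ Rn n) :
    RCompat (tLabelSet R') R' := by
  classical
  by_cases hemp : R' = ∅
  · subst hemp; exact rcompat_empty
  have hne : R'.Nonempty := Set.nonempty_iff_ne_empty.mpr hemp
  obtain ⟨tm, htm, htnot⟩ := Set.exists_of_ssubset hss
  by_cases ht1 : t1 n ∈ R'
  · rcases mem_Rn_elim htm with rfl | ⟨i0, h20, hn0, rfl⟩
    · exact absurd ht1 htnot
    · exact compat_core hn R' hss.subset hne i0 h20 (le_of_lt hn0) (fun _ => hn0)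
        (fun i hti heq => htnot (heq ▸ hti)) (Or.inl ht1)
  · refine compat_core hn R' hss.subset hne n (by omega) le_rfl
      (fun h => absurd h ht1) (fun i hti heq => ?_) (Or.inr rfl)
    have := ti_mem_lt hn (hss.subset hti)
    omega

end Main
/-- for every n ≥ 3 there is an incompatible set of n-1 rooted triplets
over n labels, every proper subset of which is compatible. -/
theorem exists_minimal_incompatible_triplets (n : ℕ) (hn : 3 ≤ n) :
    ∃ R : Set (Sym2 ℕ × ℕ),
      (∀ t ∈ R, IsTriplet t) ∧
      (tLabelSet R).ncard = n ∧
      R.ncard = n - 1 ∧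
      ¬ RCompat (tLabelSet R) R ∧
      (∀ R', R' ⊂ R → RCompat (tLabelSet R') R') := by
  refine ⟨Main.Rn n, Main.triplets_Rn hn, Main.ncard_labels_Rn hn, Main.ncard_Rn hn, ?_, ?_⟩
  · rintro ⟨T, hT⟩
    exact Main.incompat_Rn hn T hT
  · intro R' hss
    exact Main.compat_subset hn R' hss
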